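/- Let L > 0, β ∈ ℝ, and f ∈ H¹(T_L). Set g = Γ_β(f) = e^{−iβI(f)}f and μ = M(f)/L. Then H(f) = Im∫_{T_L} g·conj(g') dx + (1/2 − β)∫_{T_L}|g|⁴ dx + Lβμ². -/

import Mathlib

open MeasureTheory Real Complex Filter
open scoped Topology

noncomputable section

/-- The squared `L²` norm over one period `[0,L)`; for `f` itself this is the mass `M(f)`. -/
def Mq (L : ℝ) (f : ℝ → ℂ) : ℝ := ∫ x in Set.Ioc (0:ℝ) L, ‖f x‖ ^ 2

/-- The `L⁴(T_L)` norm. -/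
def L4 (L : ℝ) (f : ℝ → ℂ) : ℝ := (∫ x in Set.Ioc (0:ℝ) L, ‖f x‖ ^ 4) ^ ((1:ℝ)/4)

/-- The `L⁶(T_L)` norm. -/
def L6 (L : ℝ) (f : ℝ → ℂ) : ℝ := (∫ x in Set.Ioc (0:ℝ) L, ‖f x‖ ^ 6) ^ ((1:ℝ)/6)

/-- `f` is an `H¹` function on the circle `T_L = ℝ/(Lℤ)` with weak derivative `fd`:
both are periodic with period `L`, `fd` is square-integrable on a period, and `f`
is the antiderivative of `fd`. -/
structure H1p (L : ℝ) (f fd : ℝ → ℂ) : Prop where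
  per_f : Function.Periodic f L
  per_fd : Function.Periodic fd L
  memL2 : MemLp fd 2 (volume.restrict (Set.Ioc 0 L))
  eq_int : ∀ x : ℝ, f x = f 0 + ∫ t in (0:ℝ)..x, fd t

/-- The `H¹(T_L)` norm of `f` (with weak derivative `fd`). -/
def H1norm (L : ℝ) (f fd : ℝ → ℂ) : ℝ := Real.sqrt (Mq L f + Mq L fd)

/-- The conserved quantity `𝓔(f) = ∫|f'|² − (1/16)∫|f|⁶ + (3/8)μ(f)∫|f|⁴`. -/
def calE (L : ℝ) (f fd : ℝ → ℂ) : ℝ :=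
  Mq L fd - (1/16) * (∫ x in Set.Ioc (0:ℝ) L, ‖f x‖ ^ 6)
    + (3/8) * (Mq L f / L) * ∫ x in Set.Ioc (0:ℝ) L, ‖f x‖ ^ 4

/-- The momentum `P(f) = Im ∫ f conj(f') − (1/4)∫|f|⁴`. -/
def momP (L : ℝ) (f fd : ℝ → ℂ) : ℝ :=
  (∫ x in Set.Ioc (0:ℝ) L, f x * (starRingEnd ℂ) (fd x)).im
    - (1/4) * ∫ x in Set.Ioc (0:ℝ) L, ‖f x‖ ^ 4

/-- The optimal Gagliardo–Nirenberg constant `C_GN = 3^{1/6} (2π)^{−1/9}`. -/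
def CGN : ℝ := (3:ℝ) ^ ((1:ℝ)/6) * (2 * Real.pi) ^ (-((1:ℝ)/9))

/-- Pointwise gauge identity. -/
lemma gauge_pointwise (β v : ℝ) (a b : ℂ) (c : ℝ) :
    (Complex.exp (-(Complex.I * β * v)) * a) *
      (starRingEnd ℂ) (Complex.exp (-(Complex.I * β * v)) * (b - Complex.I * β * (c:ℂ) * a))
    = a * (starRingEnd ℂ) b + Complex.I * β * ((c * ‖a‖^2 : ℝ) : ℂ) := by
  have h1 : Complex.exp (-(Complex.I * β * v)) *
      (starRingEnd ℂ) (Complex.exp (-(Complex.I * β * v))) = 1 := by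
    rw [← Complex.exp_conj, ← Complex.exp_add]
    simp [map_mul, Complex.conj_I]
  have h2 : a * (starRingEnd ℂ) a = ((‖a‖^2 : ℝ) : ℂ) := by
    rw [Complex.mul_conj]
    norm_cast
    rw [Complex.normSq_eq_norm_sq]
  calc (Complex.exp (-(Complex.I * β * v)) * a) *
      (starRingEnd ℂ) (Complex.exp (-(Complex.I * β * v)) * (b - Complex.I * β * (c:ℂ) * a))
      = (Complex.exp (-(Complex.I * β * v)) *
          (starRingEnd ℂ) (Complex.exp (-(Complex.I * β * v)))) *
        (a * (starRingEnd ℂ) b + Complex.I * β * c * (a * (starRingEnd ℂ) a)) := by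
        simp only [map_mul, map_sub, Complex.conj_I, Complex.conj_ofReal]
        ring
    _ = a * (starRingEnd ℂ) b + Complex.I * β * ((c * ‖a‖^2 : ℝ) : ℂ) := by
        rw [h1, h2]; push_cast; ring

/-- An `H¹` function on the circle is continuous. -/
lemma H1p.continuous_f {L : ℝ} (hL : 0 < L) {f fd : ℝ → ℂ} (hf : H1p L f fd) :
    Continuous f := by
  have hfin : IsFiniteMeasure (volume.restrict (Set.Ioc (0:ℝ) L)) := by
    constructor; simp [Real.volume_Ioc]
  have hint : IntegrableOn fd (Set.Ioc 0 L) := hf.memL2.integrable one_le_two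
  have h0 : IntervalIntegrable fd volume 0 L :=
    (intervalIntegrable_iff_integrableOn_Ioc_of_le hL.le).2 hint
  have hshift : ∀ n : ℤ, IntervalIntegrable fd volume (n*L) (n*L + L) := by
    intro n
    have h1 := h0.comp_sub_right (n*L)
    have heq : (fun x => fd (x - n*L)) = fd := funext fun x => (hf.per_fd.int_mul n).sub_eq x
    rw [heq] at h1
    simpa [add_comm] using h1
  have hk : ∀ k : ℕ, IntervalIntegrable fd volume (-(k*L)) (k*L) := by
    intro k
    induction k with
    | zero => simp
    | succ k ih =>
      have hr : IntervalIntegrable fd volume ((k:ℝ)*L) (((k:ℝ)+1)*L) := by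
        have h2 := hshift k
        push_cast at h2
        rw [show ((k:ℝ)+1)*L = (k:ℝ)*L + L by ring]
        exact h2
      have hl : IntervalIntegrable fd volume (-(((k:ℝ)+1)*L)) (-((k:ℝ)*L)) := by
        have h2 := hshift (-(k+1))
        push_cast at h2
        rw [show -(((k:ℝ)+1)*L) = (-((k:ℝ)+1))*L by ring,
          show -((k:ℝ)*L) = (-((k:ℝ)+1))*L + L by ring]
        exact h2
      have h3 := (hl.trans ih).trans hr
      push_cast
      exact h3
  have hall : ∀ a b : ℝ, IntervalIntegrable fd volume a b := by
    intro a b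
    obtain ⟨k, hkk⟩ := exists_nat_ge (max |a| |b| / L)
    have hbd : max |a| |b| ≤ k * L := by
      rw [div_le_iff₀ hL] at hkk; linarith
    refine (hk k).mono_set ?_
    have h1 : -((k:ℝ)*L) ≤ (k:ℝ)*L := neg_le_self (by positivity)
    rw [Set.uIcc_of_le h1]
    have ha := abs_le.1 (le_trans (le_max_left |a| |b|) hbd)
    have hb := abs_le.1 (le_trans (le_max_right |a| |b|) hbd)
    exact Set.uIcc_subset_Icc ⟨ha.1, ha.2⟩ ⟨hb.1, hb.2⟩
  have : f = fun x => f 0 + ∫ t in (0:ℝ)..x, fd t := funext hf.eq_int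
  rw [this]
  exact continuous_const.add (intervalIntegral.continuous_primitive hall 0)

theorem statement6 (L β : ℝ) (hL : 0 < L) (f fd : ℝ → ℂ) (hf : H1p L f fd)
    (V : ℝ → ℝ) (hVper : Function.Periodic V L)
    (hVmean : (∫ x in Set.Ioc (0:ℝ) L, V x) = 0)
    (hVderiv : ∀ x : ℝ, HasDerivAt V (‖f x‖ ^ 2 - Mq L f / L) x) :
    (∫ x in Set.Ioc (0:ℝ) L, f x * (starRingEnd ℂ) (fd x)).im
        + (1/2) * (∫ x in Set.Ioc (0:ℝ) L, ‖f x‖ ^ 4)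
      = (∫ x in Set.Ioc (0:ℝ) L,
            (Complex.exp (-(Complex.I * β * V x)) * f x) *
              (starRingEnd ℂ) (Complex.exp (-(Complex.I * β * V x)) *
                (fd x - Complex.I * β * ((‖f x‖ ^ 2 - Mq L f / L : ℝ) : ℂ) * f x))).im
        + (1/2 - β) * (∫ x in Set.Ioc (0:ℝ) L,
            ‖Complex.exp (-(Complex.I * β * V x)) * f x‖ ^ 4)
        + L * β * (Mq L f / L) ^ 2 := by
  have hfin : IsFiniteMeasure (volume.restrict (Set.Ioc (0:ℝ) L)) := by
    constructor; simp [Real.volume_Ioc]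
  have hcont : Continuous f := hf.continuous_f hL
  -- global bound on f
  have hbound : ∃ C, ∀ x, ‖f x‖ ≤ C := by
    obtain ⟨C, hC⟩ := (isCompact_Icc (a := (0:ℝ)) (b := L)).exists_bound_of_continuousOn
      hcont.continuousOn
    refine ⟨C, fun x => ?_⟩
    obtain ⟨y, hy, hxy⟩ := hf.per_f.exists_mem_Ico₀ hL x
    rw [hxy]
    exact hC y (Set.Ico_subset_Icc_self hy)
  -- integrabilities
  have hint_fd : IntegrableOn fd (Set.Ioc 0 L) := hf.memL2.integrable one_le_two
  have hstar : Integrable (fun x => (starRingEnd ℂ) (fd x))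
      (volume.restrict (Set.Ioc (0:ℝ) L)) :=
    MeasureTheory.Integrable.mono hint_fd
      (Complex.continuous_conj.comp_aestronglyMeasurable hint_fd.1)
      (Filter.Eventually.of_forall fun x => by simp)
  have hA : Integrable (fun x => f x * (starRingEnd ℂ) (fd x))
      (volume.restrict (Set.Ioc (0:ℝ) L)) :=
    hstar.bdd_mul hcont.aestronglyMeasurable (Filter.Eventually.of_forall hbound.choose_spec)
  have h2int : Integrable (fun x => ‖f x‖ ^ 2) (volume.restrict (Set.Ioc (0:ℝ) L)) :=
    ((hcont.norm.pow 2)).integrableOn_Ioc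
  have h4int : Integrable (fun x => ‖f x‖ ^ 4) (volume.restrict (Set.Ioc (0:ℝ) L)) :=
    ((hcont.norm.pow 4)).integrableOn_Ioc
  have hB : Integrable
      (fun x => ((‖f x‖ ^ 4 - Mq L f / L * ‖f x‖ ^ 2 : ℝ) : ℂ))
      (volume.restrict (Set.Ioc (0:ℝ) L)) := by
    exact (Complex.continuous_ofReal.comp
      ((hcont.norm.pow 4).sub (continuous_const.mul (hcont.norm.pow 2)))).integrableOn_Ioc
  -- pointwise identity
  have hpt : ∀ x : ℝ,
      (Complex.exp (-(Complex.I * β * V x)) * f x) *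
          (starRingEnd ℂ) (Complex.exp (-(Complex.I * β * V x)) *
            (fd x - Complex.I * β * ((‖f x‖ ^ 2 - Mq L f / L : ℝ) : ℂ) * f x))
        = f x * (starRingEnd ℂ) (fd x)
          + Complex.I * β * ((‖f x‖ ^ 4 - Mq L f / L * ‖f x‖ ^ 2 : ℝ) : ℂ) := by
    intro x
    rw [gauge_pointwise β (V x) (f x) (fd x) (‖f x‖ ^ 2 - Mq L f / L)]
    rw [show (‖f x‖ ^ 2 - Mq L f / L) * ‖f x‖ ^ 2
      = ‖f x‖ ^ 4 - Mq L f / L * ‖f x‖ ^ 2 by ring]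
  -- the gauged momentum integral
  have hIeq : (∫ x in Set.Ioc (0:ℝ) L,
      (Complex.exp (-(Complex.I * β * V x)) * f x) *
        (starRingEnd ℂ) (Complex.exp (-(Complex.I * β * V x)) *
          (fd x - Complex.I * β * ((‖f x‖ ^ 2 - Mq L f / L : ℝ) : ℂ) * f x)))
    = (∫ x in Set.Ioc (0:ℝ) L, f x * (starRingEnd ℂ) (fd x))
      + Complex.I * β *
        (((∫ x in Set.Ioc (0:ℝ) L, (‖f x‖ ^ 4 - Mq L f / L * ‖f x‖ ^ 2)) : ℝ) : ℂ) := by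
    simp only [hpt]
    rw [integral_add hA (hB.const_mul _), integral_const_mul]
    congr 2
    exact integral_ofReal (𝕜 := ℂ)
  have hr : (∫ x in Set.Ioc (0:ℝ) L, (‖f x‖ ^ 4 - Mq L f / L * ‖f x‖ ^ 2))
      = (∫ x in Set.Ioc (0:ℝ) L, ‖f x‖ ^ 4) - Mq L f / L * Mq L f := by
    rw [integral_sub h4int (h2int.const_mul _), integral_const_mul]
    rfl
  have hnorm : ∀ x : ℝ, ‖Complex.exp (-(Complex.I * β * V x)) * f x‖ = ‖f x‖ := by
    intro x
    simp [Complex.norm_exp]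
  have hIm : (∫ x in Set.Ioc (0:ℝ) L,
      (Complex.exp (-(Complex.I * β * V x)) * f x) *
        (starRingEnd ℂ) (Complex.exp (-(Complex.I * β * V x)) *
          (fd x - Complex.I * β * ((‖f x‖ ^ 2 - Mq L f / L : ℝ) : ℂ) * f x))).im
    = (∫ x in Set.Ioc (0:ℝ) L, f x * (starRingEnd ℂ) (fd x)).im
      + β * ((∫ x in Set.Ioc (0:ℝ) L, ‖f x‖ ^ 4) - Mq L f / L * Mq L f) := by
    rw [hIeq, hr]
    simp [Complex.add_im, Complex.mul_im, Complex.mul_re]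
  rw [hIm]
  simp only [hnorm]
  have hLne : L ≠ 0 := hL.ne'
  field_simp
  ring
end
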